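/- Let K be an infinitesimally symplectic 2n×2n matrix with τ := (1/2)Tr K² ≠ 0, and suppose there is an (n−1)-dimensional isotropic subspace λ with Kλ = 0. Then dim(im K²) = 2, dim(ker K²) = 2n−2, and ℝ^{2n} = ker K² ⊕ im K² is a decomposition into mutually skew-orthogonal symplectic subspaces. -/

import Mathlib

open scoped BigOperators
open Sum

noncomputable section

/-- Phase space `ℝ^{2n}`: index `inl i` is the `q_i` (position) coordinate,
`inr i` is the `p_i` (momentum) coordinate. -/
abbrev PS (n : ℕ) := (Fin n ⊕ Fin n) → ℝ

/-- Standard symplectic inner product `[z₁,z₂] = q₁·p₂ − p₁·q₂`. -/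
def symp {n : ℕ} (u v : PS n) : ℝ :=
  (∑ i, u (inl i) * v (inr i)) - ∑ i, u (inr i) * v (inl i)

/-- Gradient of a function on phase space. -/
def grad {n : ℕ} (F : PS n → ℝ) (z : PS n) : PS n :=
  fun i => fderiv ℝ F z (Pi.single i 1)

/-- Standard Poisson bracket `{F,G} = ∇F·J·∇G`. -/
def poisson {n : ℕ} (F G : PS n → ℝ) (z : PS n) : ℝ :=
  symp (grad F z) (grad G z)

/-- Standard symplectic matrix `J = [[0,I],[−I,0]]`. -/
def Jmat (n : ℕ) : Matrix (Fin n ⊕ Fin n) (Fin n ⊕ Fin n) ℝ :=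
  Matrix.fromBlocks 0 1 (-1) 0

/-- Hamiltonian vector field `ξ = J·∇F`. -/
def ham {n : ℕ} (F : PS n → ℝ) (z : PS n) : PS n :=
  (Jmat n).mulVec (grad F z)

/-- Hessian matrix of second partial derivatives. -/
def hess {n : ℕ} (F : PS n → ℝ) (z : PS n) :
    Matrix (Fin n ⊕ Fin n) (Fin n ⊕ Fin n) ℝ :=
  fun i j => fderiv ℝ (fun w => fderiv ℝ F w (Pi.single j 1)) z (Pi.single i 1)

variable {n : ℕ}

lemma symp_add_left (u u' v : PS n) : symp (u + u') v = symp u v + symp u' v := by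
  simp [symp, add_mul, Finset.sum_add_distrib]; ring

lemma symp_add_right (u v v' : PS n) : symp u (v + v') = symp u v + symp u v' := by
  simp [symp, mul_add, Finset.sum_add_distrib]; ring

lemma symp_smul_left (c : ℝ) (u v : PS n) : symp (c • u) v = c * symp u v := by
  simp [symp, Finset.mul_sum, mul_sub, mul_assoc]

lemma symp_skew (u v : PS n) : symp u v = - symp v u := by
  simp only [symp]; rw [Finset.sum_congr rfl (fun i _ => mul_comm (u (inl i)) (v (inr i))),
    Finset.sum_congr rfl (fun i _ => mul_comm (u (inr i)) (v (inl i)))]; ring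

lemma symp_self (u : PS n) : symp u u = 0 := by
  have := symp_skew u u; linarith

lemma symp_smul_right (c : ℝ) (u v : PS n) : symp u (c • v) = c * symp u v := by
  rw [symp_skew, symp_smul_left, symp_skew v u]; ring

lemma symp_zero_left (v : PS n) : symp 0 v = 0 := by simp [symp]

lemma symp_single_inr (u : PS n) (i : Fin n) : symp u (Pi.single (inr i) 1) = u (inl i) := by
  simp [symp, Pi.single_apply]

lemma symp_single_inl (u : PS n) (i : Fin n) : symp u (Pi.single (inl i) 1) = - u (inr i) := by
  simp [symp, Pi.single_apply]

lemma symp_right_eq_zero {u : PS n} (h : ∀ v, symp u v = 0) : u = 0 := by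
  funext i
  cases i with
  | inl i => simpa [symp_single_inr] using h (Pi.single (inr i) 1)
  | inr i => simpa [symp_single_inl, neg_eq_zero] using h (Pi.single (inl i) 1)

lemma symp_left_eq_zero {v : PS n} (h : ∀ u, symp u v = 0) : v = 0 := by
  apply symp_right_eq_zero
  intro u; rw [symp_skew, h u, neg_zero]

/-- From a linear dependence of a pair with nonzero first element, the second
is a multiple of the first. -/
lemma exists_smul_of_dep {x y : PS n} (hx : x ≠ 0) (h : ¬ LinearIndependent ℝ ![x, y]) :
    ∃ c : ℝ, y = c • x := by
  rw [LinearIndependent.pair_iff] at h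
  push_neg at h
  obtain ⟨s, t, hst, hne⟩ := h
  by_cases ht : t = 0
  · have hs : s ≠ 0 := fun h0 => hne h0 ht
    have h1 : s • x = 0 := by simpa [ht] using hst
    rcases smul_eq_zero.mp h1 with h2 | h2
    · exact absurd h2 hs
    · exact absurd h2 hx
  · refine ⟨-(t⁻¹ * s), ?_⟩
    have h1 := congrArg (fun w => t⁻¹ • w) hst
    simp only [smul_add, smul_smul, inv_mul_cancel₀ ht, one_smul, smul_zero] at h1
    have h2 := add_eq_zero_iff_eq_neg.mp h1
    rw [neg_smul, h2, neg_neg]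

lemma symp_zero_of_dep {y z : PS n} (h : ¬ LinearIndependent ℝ ![y, z]) : symp y z = 0 := by
  by_cases hy : y = 0
  · rw [hy, symp_zero_left]
  · obtain ⟨c, rfl⟩ := exists_smul_of_dep hy h
    rw [symp_smul_right, symp_self, mul_zero]


/-- for an infinitesimally symplectic `K` with `τ = ½ Tr K² ≠ 0`
annihilating an `(n−1)`-dimensional isotropic subspace `λ`, one has
`dim im K² = 2`, `dim ker K² = 2n−2`, and `ℝ^{2n} = ker K² ⊕ im K²` is a decomposition
into mutually skew-orthogonal symplectic subspaces. -/
theorem stmt10 {n : ℕ} (K : Matrix (Fin n ⊕ Fin n) (Fin n ⊕ Fin n) ℝ)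
    (hK : ∀ u v : PS n, symp (K.mulVec u) v + symp u (K.mulVec v) = 0)
    (hτ : (1 / 2 : ℝ) * (K * K).trace ≠ 0)
    (lam : Submodule ℝ (PS n))
    (hlamdim : Module.finrank ℝ lam = n - 1)
    (hiso : ∀ u ∈ lam, ∀ v ∈ lam, symp u v = 0)
    (hKlam : ∀ v ∈ lam, K.mulVec v = 0) :
    Module.finrank ℝ (LinearMap.range (K * K).mulVecLin) = 2 ∧
    Module.finrank ℝ (LinearMap.ker (K * K).mulVecLin) = 2 * n - 2 ∧
    IsCompl (LinearMap.ker (K * K).mulVecLin) (LinearMap.range (K * K).mulVecLin) ∧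
    (∀ u ∈ LinearMap.ker (K * K).mulVecLin,
      ∀ v ∈ LinearMap.range (K * K).mulVecLin, symp u v = 0) ∧
    (∀ u ∈ LinearMap.ker (K * K).mulVecLin,
      (∀ v ∈ LinearMap.ker (K * K).mulVecLin, symp u v = 0) → u = 0) ∧
    (∀ u ∈ LinearMap.range (K * K).mulVecLin,
      (∀ v ∈ LinearMap.range (K * K).mulVecLin, symp u v = 0) → u = 0) := by
  classical
  have htr : (K * K).trace ≠ 0 := fun h => hτ (by rw [h, mul_zero])
  set L := (K * K).mulVecLin with hLdef
  have hKK : ∀ v : PS n, L v = K.mulVec (K.mulVec v) := by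
    intro v
    rw [hLdef, Matrix.mulVecLin_apply, ← Matrix.mulVec_mulVec]
  have hKskew : ∀ u v : PS n, symp (K.mulVec u) v = - symp u (K.mulVec v) := by
    intro u v; linarith [hK u v]
  have hsymm : ∀ u v : PS n, symp (L u) v = symp u (L v) := by
    intro u v
    rw [hKK, hKK, hKskew, hKskew]
    ring
  have hdim : Module.finrank ℝ (PS n) = n + n := by
    simp [Module.finrank_pi]
  -- the form cannot vanish identically on the range, else (K*K)² = 0 and trace K² = 0
  have hcontra : ¬ (∀ x ∈ LinearMap.range L, ∀ y ∈ LinearMap.range L, symp x y = 0) := by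
    intro hzero
    have hL2 : ∀ v, L (L v) = 0 := by
      intro v
      apply symp_left_eq_zero
      intro u
      rw [← hsymm]
      exact hzero _ ⟨u, rfl⟩ _ ⟨v, rfl⟩
    have hmat : (K * K) * ((K * K)) = 0 := by
      apply Matrix.toLin'.injective
      rw [Matrix.toLin'_apply', map_zero]
      apply LinearMap.ext
      intro v
      rw [Matrix.mulVecLin_mul, LinearMap.comp_apply]
      exact hL2 v
    have hnil : IsNilpotent (K * K) := ⟨2, by rwa [pow_two]⟩
    exact htr (Matrix.isNilpotent_trace_of_isNilpotent hnil).eq_zero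
  -- the symplectic form as a bilinear form
  let B : LinearMap.BilinForm ℝ (PS n) :=
    LinearMap.mk₂ ℝ symp symp_add_left symp_smul_left symp_add_right symp_smul_right
  have hBapp : ∀ u v : PS n, B u v = symp u v := fun u v => rfl
  have hrefl : B.IsRefl := by
    intro x y h
    rw [hBapp] at h ⊢
    rw [symp_skew, h, neg_zero]
  have hnd : B.Nondegenerate := ⟨fun m h => symp_right_eq_zero h, fun m h => symp_left_eq_zero h⟩
  set W := B.orthogonal lam with hWdef
  have hWdim : Module.finrank ℝ W = (n + n) - (n - 1) := by
    rw [hWdef, LinearMap.BilinForm.finrank_orthogonal hnd lam, hdim, hlamdim]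
  have hlamW : lam ≤ W := by
    intro x hx
    rw [hWdef, LinearMap.BilinForm.mem_orthogonal_iff]
    intro l hl
    exact hiso l hl x hx
  have hrangeK : LinearMap.range K.mulVecLin ≤ W := by
    rintro u ⟨w, rfl⟩
    rw [hWdef, LinearMap.BilinForm.mem_orthogonal_iff]
    intro l hl
    show symp l (K.mulVecLin w) = 0
    rw [Matrix.mulVecLin_apply]
    have h1 := hK l w
    rw [hKlam l hl, symp_zero_left] at h1
    linarith
  set g := K.mulVecLin.domRestrict W with hgdef
  have hkerg : (n - 1) ≤ Module.finrank ℝ (LinearMap.ker g) := by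
    have hsub : lam.comap W.subtype ≤ LinearMap.ker g := by
      rintro ⟨x, hxW⟩ hx
      have hx' : x ∈ lam := hx
      rw [LinearMap.mem_ker]
      show K.mulVecLin x = 0
      rw [Matrix.mulVecLin_apply]
      exact hKlam x hx'
    have heq : Module.finrank ℝ (lam.comap W.subtype) = n - 1 := by
      rw [← Submodule.finrank_map_subtype_eq W (lam.comap W.subtype),
        Submodule.map_comap_subtype, inf_of_le_right hlamW, hlamdim]
    rw [← heq]
    exact Submodule.finrank_mono hsub
  have hrn : Module.finrank ℝ (LinearMap.range g) + Module.finrank ℝ (LinearMap.ker g)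
      = (n + n) - (n - 1) := by
    rw [LinearMap.finrank_range_add_finrank_ker g, hWdim]
  have hrange_le : Module.finrank ℝ (LinearMap.range L)
      ≤ Module.finrank ℝ (LinearMap.range g) := by
    apply Submodule.finrank_mono
    rw [hgdef, LinearMap.range_domRestrict]
    rw [hLdef, Matrix.mulVecLin_mul, LinearMap.range_comp]
    exact Submodule.map_mono hrangeK
  have hge2 : 2 ≤ Module.finrank ℝ (LinearMap.range L) := by
    push_neg at hcontra
    obtain ⟨x, hx, y, hy, hxy⟩ := hcontra
    have hli : LinearIndependent ℝ ![x, y] := by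
      by_contra h
      exact hxy (symp_zero_of_dep h)
    have hspan : Submodule.span ℝ (Set.range ![x, y]) ≤ LinearMap.range L := by
      rw [Submodule.span_le]
      rintro z ⟨i, rfl⟩
      fin_cases i
      · simpa using hx
      · simpa using hy
    calc 2 = Module.finrank ℝ (Submodule.span ℝ (Set.range ![x, y])) := by
            rw [finrank_span_eq_card hli]; simp
      _ ≤ _ := Submodule.finrank_mono hspan
  have hr2 : Module.finrank ℝ (LinearMap.range L) = 2 := by omega
  have hrnL : Module.finrank ℝ (LinearMap.range L) + Module.finrank ℝ (LinearMap.ker L)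
      = n + n := by
    rw [LinearMap.finrank_range_add_finrank_ker L, hdim]
  have hkerdim : Module.finrank ℝ (LinearMap.ker L) = 2 * n - 2 := by omega
  -- nondegeneracy of the form on the range
  have hrangeN : ∀ x ∈ LinearMap.range L, (∀ y ∈ LinearMap.range L, symp x y = 0) → x = 0 := by
    intro x hx hxall
    by_contra hx0
    apply hcontra
    intro y hy z hz
    by_cases hli : LinearIndependent ℝ ![x, y]
    · have hle : Submodule.span ℝ (Set.range ![x, y]) ≤ LinearMap.range L := by
        rw [Submodule.span_le]
        rintro w ⟨i, rfl⟩
        fin_cases i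
        · simpa using hx
        · simpa using hy
      have hfr : Module.finrank ℝ (LinearMap.range L)
          ≤ Module.finrank ℝ (Submodule.span ℝ (Set.range ![x, y])) := by
        rw [hr2, finrank_span_eq_card hli]; simp
      have hspan := Submodule.eq_of_le_of_finrank_le hle hfr
      have hz' : z ∈ Submodule.span ℝ ({x, y} : Set (PS n)) := by
        rw [← Matrix.range_cons_cons_empty x y ![], hspan]
        exact hz
      obtain ⟨a, b, hab⟩ := Submodule.mem_span_pair.mp hz'
      rw [← hab, symp_add_right, symp_smul_right, symp_smul_right, symp_self,
        symp_skew y x, hxall y hy]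
      ring
    · by_cases hy0 : y = 0
      · rw [hy0, symp_zero_left]
      · obtain ⟨c, rfl⟩ := exists_smul_of_dep hx0 hli
        rw [symp_smul_left, hxall z hz, mul_zero]
  have hskeworth : ∀ u ∈ LinearMap.ker L, ∀ v ∈ LinearMap.range L, symp u v = 0 := by
    rintro u hu v ⟨w, rfl⟩
    rw [← hsymm, LinearMap.mem_ker.mp hu, symp_zero_left]
  have hdisj : Disjoint (LinearMap.ker L) (LinearMap.range L) := by
    rw [Submodule.disjoint_def]
    intro x hxk hxr
    exact hrangeN x hxr (fun y hy => hskeworth x hxk y hy)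
  have hcodis : Codisjoint (LinearMap.ker L) (LinearMap.range L) := by
    rw [codisjoint_iff]
    apply Submodule.eq_top_of_finrank_eq
    have hsum := Submodule.finrank_sup_add_finrank_inf_eq (LinearMap.ker L) (LinearMap.range L)
    rw [hdisj.eq_bot, finrank_bot, add_zero] at hsum
    rw [hsum, hdim]
    omega
  refine ⟨hr2, hkerdim, ⟨hdisj, hcodis⟩, hskeworth, ?_, hrangeN⟩
  intro u hu h
  apply symp_right_eq_zero
  intro v
  have hv : v ∈ LinearMap.ker L ⊔ LinearMap.range L := by
    rw [codisjoint_iff.mp hcodis]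
    trivial
  obtain ⟨a, ha, b, hb, rfl⟩ := Submodule.mem_sup.mp hv
  rw [symp_add_right, h a ha, hskeworth u hu b hb, add_zero]
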